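/- Fix K ≥ 1 and L > 1. For k = 1,…,K let λ_k = K − k + 1, F_k(p) = (1 − e^{−λ_k·p})/(1 − e^{−λ_k·L}) on [0, L], π_k(p) = p·(1 − F_k(p)), and α_k = 1/K. Then the optimal third-degree price-discrimination profit satisfies Σ_{k=1}^K α_k·(sup_{p ∈ [0,L]} π_k(p)) ≥ (e·(e^{−1} − e^{−L})²/K)·Σ_{k=1}^K 1/k. -/

import Mathlib

/-- Truncated exponential CDF with rate `lam` on `[0, L]`. -/
noncomputable def truncExpCdf (lam L p : ℝ) : ℝ :=
  (1 - Real.exp (-lam * p)) / (1 - Real.exp (-lam * L))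

lemma truncExp_sSup_lb (L : ℝ) (hL : 1 < L) (lam : ℝ) (hlam : 1 ≤ lam) :
    Real.exp 1 * (Real.exp (-1) - Real.exp (-L)) ^ 2 / lam ≤
      sSup ((fun p => p * (1 - truncExpCdf lam L p)) '' Set.Icc 0 L) := by
  have hlam0 : (0 : ℝ) < lam := lt_of_lt_of_le one_pos hlam
  have hL0 : (0 : ℝ) < L := lt_trans one_pos hL
  have hd : 0 < 1 - Real.exp (-lam * L) := by
    have : Real.exp (-lam * L) < Real.exp 0 := by
      apply Real.exp_lt_exp.mpr; nlinarith
    simpa [Real.exp_zero] using sub_pos.mpr this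
  -- the set is bounded above by L
  have hbdd : BddAbove ((fun p => p * (1 - truncExpCdf lam L p)) '' Set.Icc 0 L) := by
    refine ⟨L, ?_⟩
    rintro x ⟨p, ⟨hp0, hpL⟩, rfl⟩
    have hF : 0 ≤ truncExpCdf lam L p := by
      unfold truncExpCdf
      apply div_nonneg _ hd.le
      have : Real.exp (-lam * p) ≤ Real.exp 0 := by
        apply Real.exp_le_exp.mpr; nlinarith
      simpa [Real.exp_zero] using sub_nonneg.mpr this
    have h2 : p * (1 - truncExpCdf lam L p) ≤ p * 1 :=
      mul_le_mul_of_nonneg_left (by linarith) hp0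
    show p * (1 - truncExpCdf lam L p) ≤ L
    nlinarith
  have hmem : (1 / lam) * (1 - truncExpCdf lam L (1 / lam)) ∈
      ((fun p => p * (1 - truncExpCdf lam L p)) '' Set.Icc 0 L) := by
    refine ⟨1 / lam, ⟨by positivity, ?_⟩, rfl⟩
    have h1 : 1 / lam ≤ 1 := by
      rw [div_le_one hlam0]; exact hlam
    linarith
  refine le_trans ?_ (le_csSup hbdd hmem)
  -- value at 1/lam
  have hexp : Real.exp (-lam * (1 / lam)) = Real.exp (-1) := by
    congr 1; field_simp
  set a := Real.exp (-1) with ha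
  set b := Real.exp (-L) with hb
  set c := Real.exp (-lam * L) with hc
  have hX : 1 - truncExpCdf lam L (1 / lam) = (a - c) / (1 - c) := by
    unfold truncExpCdf
    rw [hexp, ← hc]
    field_simp
    ring
  rw [hX]
  have hE : Real.exp 1 * a = 1 := by
    rw [ha, ← Real.exp_add]; norm_num
  have hcb : c ≤ b := by
    apply Real.exp_le_exp.mpr; nlinarith
  have hba : b < a := by
    apply Real.exp_lt_exp.mpr; linarith
  have hc0 : 0 < c := Real.exp_pos _
  have hkey : Real.exp 1 * (a - b) ^ 2 ≤ (a - c) / (1 - c) := by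
    rw [le_div_iff₀ hd]
    have hE0 : 0 < Real.exp 1 := Real.exp_pos _
    nlinarith [sq_nonneg (a - b), mul_pos hE0 (sub_pos.mpr hba),
      mul_nonneg (mul_pos hE0 (sub_pos.mpr hba)).le hc0.le]
  calc Real.exp 1 * (a - b) ^ 2 / lam
      = (1 / lam) * (Real.exp 1 * (a - b) ^ 2) := by ring
    _ ≤ (1 / lam) * ((a - c) / (1 - c)) :=
        mul_le_mul_of_nonneg_left hkey (by positivity)

/-- **Discrimination profit of the truncated-exponential instance.**
For `K ≥ 1` segments with rates `λ_k = K - k + 1` (one-based), truncated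
exponential CDFs on `[0, L]` (`L > 1`), profit functions
`π_k p = p (1 - F_k p)` and weights `α_k = 1/K`, the optimal third-degree
price-discrimination profit satisfies
`Σ_k (1/K) sup_{p ∈ [0,L]} π_k(p) ≥ (e (e⁻¹ - e^{-L})² / K) Σ_{k=1}^K 1/k`. -/
theorem truncated_exponential_discrimination_profit_bound
    (K : ℕ) (hK : 1 ≤ K) (L : ℝ) (hL : 1 < L) :
    ∑ k : Fin K, (1 / (K : ℝ)) *
        sSup ((fun p => p * (1 - truncExpCdf ((K : ℝ) - (k.val : ℝ)) L p))
          '' Set.Icc 0 L)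
      ≥ (Real.exp 1 * (Real.exp (-1) - Real.exp (-L)) ^ 2 / K) *
        ∑ j ∈ Finset.range K, 1 / ((j : ℝ) + 1) := by
  set D := Real.exp 1 * (Real.exp (-1) - Real.exp (-L)) ^ 2 with hD
  rw [ge_iff_le, Finset.mul_sum,
    Fin.sum_univ_eq_sum_range (fun i : ℕ => (1 / (K : ℝ)) *
      sSup ((fun p => p * (1 - truncExpCdf ((K : ℝ) - (i : ℝ)) L p)) '' Set.Icc 0 L)),
    ← Finset.sum_range_reflect (fun j : ℕ => D / K * (1 / ((j : ℝ) + 1))) K]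
  apply Finset.sum_le_sum
  intro i hi
  have hi' : i < K := Finset.mem_range.mp hi
  have hcast : ((K - 1 - i : ℕ) : ℝ) + 1 = (K : ℝ) - i := by
    have h1 : (K - 1 - i : ℕ) = K - (i + 1) := by omega
    rw [h1, Nat.cast_sub (by omega : i + 1 ≤ K)]
    push_cast; ring
  simp only [hcast]
  have hlam : (1 : ℝ) ≤ (K : ℝ) - i := by
    have : (i : ℝ) + 1 ≤ (K : ℝ) := by exact_mod_cast Nat.succ_le_of_lt hi'
    linarith
  calc D / K * (1 / ((K : ℝ) - i)) = (1 / (K : ℝ)) * (D / ((K : ℝ) - i)) := by ring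
    _ ≤ (1 / (K : ℝ)) * sSup ((fun p => p * (1 - truncExpCdf ((K : ℝ) - (i : ℝ)) L p))
          '' Set.Icc 0 L) :=
        mul_le_mul_of_nonneg_left (truncExp_sSup_lb L hL _ hlam) (by positivity)
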